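/- For every natural number l ≥ 1 and real numbers x, y, z, the polynomial a_l(x,y,z) := ∑_{k,r} a_{l,k,r} x^k y^{l-k} z^r satisfies a_l(x,y,z) = 2^{1-l} (x+y)^l ∑_i C(l,2i) (1 + 4xy(z-1)/(x+y)^2)^i, whenever x + y ≠ 0, where a_{l,k,r} counts cyclic binary sequences of length l with k ones and r ones followed by zeros. -/

import Mathlib

/-- Cyclic successor of an index in `Fin l`. -/
def cyc {l : ℕ} (i : Fin l) : Fin l := ⟨(i.val + 1) % l, Nat.mod_lt _ i.pos⟩

/-- `a l k r`: the number of cyclic binary sequences of length `l` with exactly `k` ones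
and exactly `r` ones that are immediately followed (cyclically) by a zero. -/
def cycA (l k r : ℕ) : ℕ :=
  (Finset.univ.filter (fun f : Fin l → Bool =>
    (Finset.univ.filter (fun i => f i = true)).card = k ∧
    (Finset.univ.filter (fun i => f i = true ∧ f (cyc i) = false)).card = r)).card

namespace Stmt2

noncomputable def w (x y z : ℝ) (a b : Bool) : ℝ := if a then (if b then x else x*z) else y

noncomputable def M (x y z : ℝ) : Matrix Bool Bool ℝ := Matrix.of (w x y z)

lemma pow_apply (x y z : ℝ) : ∀ (n : ℕ) (a b : Bool),
    (M x y z ^ n) a b =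
      ∑ g : Fin (n+1) → Bool,
        if g 0 = a ∧ g (Fin.last n) = b
        then ∏ i : Fin n, w x y z (g i.castSucc) (g i.succ) else 0 := by
  intro n
  induction n with
  | zero =>
      intro a b
      rw [← (Equiv.funUnique (Fin 1) Bool).symm.sum_comp]
      simp only [Equiv.funUnique_symm_apply]
      simp only [pow_zero, Matrix.one_apply]
      cases a <;> cases b <;> simp [Fintype.sum_bool]
  | succ n ih =>
      intro a b
      have lhs1 : (M x y z ^ (n+1)) a b = ∑ c : Bool, (M x y z ^ n) a c * M x y z c b := by
        rw [pow_succ, Matrix.mul_apply]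
      rw [lhs1]
      rw [← (Fin.snocEquiv (fun _ : Fin (n+1+1) => Bool)).sum_comp]
      rw [Fintype.sum_prod_type]
      have hsnoc0 : ∀ (g' : Fin (n+1) → Bool) (c : Bool),
          (Fin.snoc g' c : Fin (n+2) → Bool) 0 = g' 0 := by
        intro g' c
        rw [show (0 : Fin (n+2)) = Fin.castSucc 0 by simp, Fin.snoc_castSucc]
      calc ∑ c : Bool, (M x y z ^ n) a c * M x y z c b
          = ∑ g' : Fin (n+1) → Bool,
              if g' 0 = a then
                (∏ i : Fin n, w x y z (g' i.castSucc) (g' i.succ)) * w x y z (g' (Fin.last n)) b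
              else 0 := by
            simp only [ih, Finset.sum_mul, ite_mul, zero_mul]
            rw [Finset.sum_comm]
            refine Finset.sum_congr rfl fun g' _ => ?_
            by_cases h : g' 0 = a
            · simp [h, M]
            · simp [h]
        _ = _ := by
            simp only [Fin.snocEquiv_apply]
            symm
            rw [Finset.sum_comm]
            refine Finset.sum_congr rfl fun g' _ => ?_
            have step : ∀ c : Bool,
                (if (Fin.snoc g' c : Fin (n+2) → Bool) 0 = a ∧
                    (Fin.snoc g' c : Fin (n+2) → Bool) (Fin.last (n+1)) = b
                 then ∏ i : Fin (n+1), w x y z ((Fin.snoc g' c : Fin (n+2) → Bool) i.castSucc)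
                    ((Fin.snoc g' c : Fin (n+2) → Bool) i.succ) else 0)
                = if g' 0 = a ∧ c = b then
               (∏ i : Fin n, w x y z (g' i.castSucc) (g' i.succ)) * w x y z (g' (Fin.last n)) c
                  else 0 := by
              intro c
              have hprod : (∏ i : Fin (n+1), w x y z ((Fin.snoc g' c : Fin (n+2) → Bool) i.castSucc)
                    ((Fin.snoc g' c : Fin (n+2) → Bool) i.succ))
                  = (∏ i : Fin n, w x y z (g' i.castSucc) (g' i.succ)) *
                      w x y z (g' (Fin.last n)) c := by
                rw [Fin.prod_univ_castSucc]
                congr 1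
                · refine Finset.prod_congr rfl fun i _ => ?_
                  rw [Fin.snoc_castSucc, Fin.succ_castSucc, Fin.snoc_castSucc]
                · rw [Fin.snoc_castSucc, Fin.succ_last, Fin.snoc_last]
              rw [hprod, hsnoc0 g' c, Fin.snoc_last]
            simp only [step]
            by_cases h : g' 0 = a
            · simp [h]
            · simp [h]
      

lemma trace_pow (x y z : ℝ) (m : ℕ) :
    (M x y z ^ (m+1)).trace =
      ∑ f : Fin (m+1) → Bool, ∏ i : Fin (m+1), w x y z (f i) (f (cyc i)) := by
  rw [Matrix.trace]
  simp only [Matrix.diag_apply, pow_apply]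
  rw [Finset.sum_comm]
  have hcol : ∀ g : Fin (m+2) → Bool,
      (∑ a : Bool, if g 0 = a ∧ g (Fin.last (m+1)) = a
          then ∏ i : Fin (m+1), w x y z (g i.castSucc) (g i.succ) else 0)
      = if g (Fin.last (m+1)) = g 0
          then ∏ i : Fin (m+1), w x y z (g i.castSucc) (g i.succ) else 0 := by
    intro g
    cases h0 : g 0 <;> cases hl : g (Fin.last (m+1)) <;>
      simp [Fintype.sum_bool, h0, hl]
  rw [Finset.sum_congr rfl (fun g _ => hcol g)]
  rw [← Finset.sum_filter]
  refine Finset.sum_nbij' (fun g => (fun i => g i.castSucc))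
    (fun f => Fin.snoc f (f 0)) ?_ ?_ ?_ ?_ ?_
  · intro g hg; exact Finset.mem_univ _
  · intro f hf
    simp only [Finset.mem_filter, Finset.mem_univ, true_and, Fin.snoc_last]
    rw [show (0 : Fin (m+2)) = Fin.castSucc 0 by simp, Fin.snoc_castSucc]
  · intro g hg
    simp only [Finset.mem_filter, Finset.mem_univ, true_and] at hg
    funext j
    refine Fin.lastCases ?_ (fun i => ?_) j
    · beta_reduce
      rw [Fin.snoc_last, Fin.castSucc_zero]
      exact hg.symm
    · beta_reduce
      rw [Fin.snoc_castSucc]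
  · intro f hf
    funext i
    beta_reduce
    rw [Fin.snoc_castSucc]
  · intro g hg
    simp only [Finset.mem_filter, Finset.mem_univ, true_and] at hg
    refine Finset.prod_congr rfl fun i _ => ?_
    congr 1
    -- g i.succ = g ((cyc i).castSucc)
    by_cases h : i.val + 1 < m + 1
    · congr 1
      ext
      simp [cyc, Fin.val_succ, Nat.mod_eq_of_lt h]
    · have hi : i.val = m := by omega
      have h1 : i.succ = Fin.last (m+1) := by ext; simp [Fin.val_succ, hi]
      have h2 : (cyc i).castSucc = (0 : Fin (m+2)) := by
        ext; simp [cyc, hi]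
      beta_reduce
      rw [h1, h2, hg]

def K {l : ℕ} (f : Fin l → Bool) : ℕ := (Finset.univ.filter (fun i => f i = true)).card
def R {l : ℕ} (f : Fin l → Bool) : ℕ :=
  (Finset.univ.filter (fun i => f i = true ∧ f (cyc i) = false)).card

lemma prod_w (x y z : ℝ) (l : ℕ) (f : Fin l → Bool) :
    (∏ i : Fin l, w x y z (f i) (f (cyc i))) = x ^ K f * y ^ (l - K f) * z ^ R f := by
  have hw : ∀ a b : Bool, w x y z a b =
      (if a = true then x else y) * (if a = true ∧ b = false then z else 1) := by
    intro a b; cases a <;> cases b <;> simp [w]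
  simp only [hw]
  rw [Finset.prod_mul_distrib]
  congr 1
  · rw [Finset.prod_ite, Finset.prod_const, Finset.prod_const]
    have h1 : (Finset.filter (fun i => f i = true) Finset.univ).card = K f := rfl
    have h2 : (Finset.filter (fun i => ¬ f i = true) Finset.univ).card = l - K f := by
      have := Finset.card_filter_add_card_filter_not
        (s := (Finset.univ : Finset (Fin l))) (p := fun i => f i = true)
      simp only [Finset.card_univ, Fintype.card_fin] at this
      unfold K
      omega
    rw [h1, h2]
  · rw [Finset.prod_ite, Finset.prod_const, Finset.prod_const, one_pow, mul_one]
    rfl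

lemma lhs_eq (x y z : ℝ) (l : ℕ) :
    ∑ k ∈ Finset.range (l + 1), ∑ r ∈ Finset.range (l + 1),
        (cycA l k r : ℝ) * x ^ k * y ^ (l - k) * z ^ r =
      ∑ f : Fin l → Bool, ∏ i : Fin l, w x y z (f i) (f (cyc i)) := by
  simp only [prod_w]
  rw [← Finset.sum_product']
  rw [← Finset.sum_fiberwise_of_maps_to
    (g := fun f : Fin l → Bool => ((K f, R f) : ℕ × ℕ))
    (t := Finset.range (l+1) ×ˢ Finset.range (l+1))
    (f := fun f : Fin l → Bool => x ^ K f * y ^ (l - K f) * z ^ R f) ?_]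
  · refine Finset.sum_congr rfl fun p hp => ?_
    obtain ⟨k, r⟩ := p
    have hfil : (Finset.univ.filter
        (fun f : Fin l → Bool => (K f, R f) = (k, r))) =
        (Finset.univ.filter (fun f : Fin l → Bool => K f = k ∧ R f = r)) := by
      apply Finset.filter_congr
      intro f _
      simp [Prod.ext_iff]
    rw [hfil]
    have hconst : ∀ f ∈ Finset.univ.filter (fun f : Fin l → Bool => K f = k ∧ R f = r),
        x ^ K f * y ^ (l - K f) * z ^ R f = x ^ k * y ^ (l-k) * z ^ r := by
      intro f hf
      simp only [Finset.mem_filter] at hf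
      rw [hf.2.1, hf.2.2]
    rw [Finset.sum_congr rfl hconst, Finset.sum_const, nsmul_eq_mul]
    rw [show (Finset.univ.filter (fun f : Fin l → Bool => K f = k ∧ R f = r)).card
      = cycA l k r from rfl]
    ring
  · intro f _
    simp only [Finset.mem_product, Finset.mem_range]
    have h1 : K f ≤ l := by
      have := Finset.card_filter_le (Finset.univ : Finset (Fin l)) (fun i => f i = true)
      unfold K
      simpa using this
    have h2 : R f ≤ l := by
      have := Finset.card_filter_le (Finset.univ : Finset (Fin l))
        (fun i => f i = true ∧ f (cyc i) = false)
      unfold R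
      simpa using this
    omega

noncomputable def t (x y z : ℝ) (n : ℕ) : ℝ := (M x y z ^ n).trace

lemma M_sq (x y z : ℝ) : M x y z ^ 2 =
    (x + y) • M x y z - (x*y*(1-z)) • (1 : Matrix Bool Bool ℝ) := by
  ext a b
  cases a <;> cases b <;>
    simp [M, w, pow_two, Matrix.mul_apply, Fintype.sum_bool, Matrix.one_apply,
      Matrix.smul_apply, Matrix.sub_apply] <;> ring

lemma t_zero (x y z : ℝ) : t x y z 0 = 2 := by
  simp [t, Matrix.trace, Matrix.diag, Fintype.sum_bool, Matrix.one_apply]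

lemma t_one (x y z : ℝ) : t x y z 1 = x + y := by
  simp [t, Matrix.trace, Matrix.diag, Fintype.sum_bool, M, w, add_comm]

lemma t_rec (x y z : ℝ) (n : ℕ) :
    t x y z (n+2) = (x+y) * t x y z (n+1) - (x*y*(1-z)) * t x y z n := by
  unfold t
  rw [pow_add, M_sq, mul_sub, Matrix.trace_sub]
  rw [Matrix.mul_smul, Matrix.mul_smul, Matrix.trace_smul, Matrix.trace_smul]
  rw [mul_one, ← pow_succ]
  simp [smul_eq_mul]

lemma t_closed (x y z : ℝ) (lp lm : ℂ) (hsum : lp + lm = (x:ℂ) + y)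
    (hprod : lp * lm = (x:ℂ)*y*(1-z)) (n : ℕ) :
    ((t x y z n : ℝ) : ℂ) = lp ^ n + lm ^ n := by
  induction n using Nat.twoStepInduction with
  | zero => simp [t_zero]; norm_num
  | one => simp [t_one, hsum.symm]
  | more n ih1 ih2 =>
      rw [t_rec]
      push_cast
      rw [ih1, ih2, ← hsum, ← hprod]
      ring

lemma pow_add_pow_even (S e : ℂ) (n : ℕ) :
    (S + e)^n + (S - e)^n =
      2 * ∑ i ∈ Finset.range (n/2 + 1), (n.choose (2*i) : ℂ) * S^(n - 2*i) * e^(2*i) := by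
  rw [show S + e = e + S by ring, show S - e = -e + S by ring, add_pow, add_pow,
    ← Finset.sum_add_distrib]
  have hterm : ∀ m ∈ Finset.range (n+1),
      e ^ m * S ^ (n - m) * (n.choose m : ℂ) + (-e) ^ m * S ^ (n - m) * (n.choose m : ℂ)
      = if Even m then 2 * ((n.choose m : ℂ) * S^(n-m) * e^m) else 0 := by
    intro m _
    by_cases h : Even m
    · rw [if_pos h, h.neg_pow]; ring
    · rw [if_neg h, (Nat.not_even_iff_odd.1 h).neg_pow]; ring
  rw [Finset.sum_congr rfl hterm]
  rw [Finset.sum_ite, Finset.sum_const_zero, add_zero, Finset.mul_sum]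
  refine Finset.sum_nbij' (fun m => m / 2) (fun i => 2 * i) ?_ ?_ ?_ ?_ ?_
  · intro m hm
    simp only [Finset.mem_filter, Finset.mem_range] at hm ⊢
    omega
  · intro i hi
    simp only [Finset.mem_filter, Finset.mem_range] at hi ⊢
    constructor
    · omega
    · exact even_two_mul i
  · intro m hm
    simp only [Finset.mem_filter, Finset.mem_range] at hm
    obtain ⟨-, k, hk⟩ := hm
    show 2 * (m / 2) = m
    omega
  · intro i _
    show 2 * i / 2 = i
    omega
  · intro m hm
    simp only [Finset.mem_filter, Finset.mem_range] at hm
    obtain ⟨-, k, hk⟩ := hm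
    have : 2 * (m / 2) = m := by omega
    rw [this]


end Stmt2

theorem stmt2 (l : ℕ) (hl : 1 ≤ l) (x y z : ℝ) (hxy : x + y ≠ 0) :
    ∑ k ∈ Finset.range (l + 1), ∑ r ∈ Finset.range (l + 1),
        (cycA l k r : ℝ) * x ^ k * y ^ (l - k) * z ^ r =
      (2 : ℝ) ^ ((1 : ℤ) - (l : ℤ)) * (x + y) ^ l *
        ∑ i ∈ Finset.range (l / 2 + 1),
          (l.choose (2 * i) : ℝ) * (1 + 4 * x * y * (z - 1) / (x + y) ^ 2) ^ i := by
  obtain ⟨m, rfl⟩ : ∃ m, l = m + 1 := ⟨l - 1, by omega⟩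
  rw [Stmt2.lhs_eq, ← Stmt2.trace_pow]
  rw [show (Stmt2.M x y z ^ (m+1)).trace = Stmt2.t x y z (m+1) from rfl]
  -- set up complex square root of the discriminant
  set D : ℝ := (x+y)^2 + 4*x*y*(z-1) with hD
  obtain ⟨e, he⟩ : ∃ e : ℂ, e ^ 2 = (D : ℂ) :=
    ⟨(D : ℂ) ^ (((2:ℕ) : ℂ)⁻¹), Complex.cpow_nat_inv_pow _ two_ne_zero⟩
  set S : ℂ := (x:ℂ) + (y:ℂ) with hS
  have hS0 : S ≠ 0 := by
    rw [hS]
    exact_mod_cast Complex.ofReal_ne_zero.mpr hxy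
  have he' : e ^ 2 = S^2 + 4*(x:ℂ)*(y:ℂ)*((z:ℂ)-1) := by
    rw [he, hD]; push_cast; ring
  have ht := Stmt2.t_closed x y z ((S+e)/2) ((S-e)/2) (by ring)
    (by
      have h4 : (S+e)/2 * ((S-e)/2) = (S^2 - e^2)/4 := by ring
      rw [h4, he', hS]; ring) (m+1)
  rw [← Complex.ofReal_inj, ht]
  have hlp : ((S+e)/2) ^ (m+1) + ((S-e)/2) ^ (m+1)
      = ((S+e)^(m+1) + (S-e)^(m+1)) / 2^(m+1) := by
    rw [div_pow, div_pow, ← add_div]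
  rw [hlp, Stmt2.pow_add_pow_even]
  push_cast
  have h2 : (2:ℂ) ^ ((1:ℤ) - ((m:ℤ)+1)) = 2 / 2^(m+1) := by
    rw [show (1:ℤ) - ((m:ℤ)+1) = 1 - ((m+1 : ℕ) : ℤ) by push_cast; ring,
      zpow_sub₀ (two_ne_zero), zpow_one, zpow_natCast]
  have hterm : ∀ i ∈ Finset.range ((m+1)/2 + 1),
      ((m+1).choose (2*i) : ℂ) * (1 + 4*(x:ℂ)*(y:ℂ)*((z:ℂ)-1)/S^2)^i * S^(m+1)
        = ((m+1).choose (2*i) : ℂ) * S^(m+1-2*i) * e^(2*i) := by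
    intro i hi
    have h2i : 2*i ≤ m+1 := by
      simp only [Finset.mem_range] at hi
      omega
    have hT : (1 + 4*(x:ℂ)*(y:ℂ)*((z:ℂ)-1)/S^2) = e^2 / S^2 := by
      rw [he']
      field_simp
    rw [hT, div_pow, ← pow_mul, ← pow_mul, mul_comm 2 i, mul_comm i 2]
    have hsplit : S^(m+1) = S^(m+1-2*i) * S^(2*i) := by
      rw [← pow_add]
      congr 1
      omega
    rw [hsplit]
    field_simp
  have hsum2 : (∑ i ∈ Finset.range ((m+1)/2 + 1),
        ((m+1).choose (2*i) : ℂ) * (1 + 4*(x:ℂ)*(y:ℂ)*((z:ℂ)-1)/S^2)^i) * S^(m+1)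
      = ∑ i ∈ Finset.range ((m+1)/2 + 1),
        ((m+1).choose (2*i) : ℂ) * S^(m+1-2*i) * e^(2*i) := by
    rw [Finset.sum_mul]
    exact Finset.sum_congr rfl hterm
  rw [h2, ← hsum2]
  rw [hS]
  ring
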